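/- Let β₁, β₂ ∈ ℝ with E(β₁,β₂) ≠ 0. Then there exists a natural number n₀ such that for all n ≥ n₀, the Fibonacci quaternion F_n is invertible in the generalized quaternion algebra ℍ(β₁,β₂). -/

import Mathlib

open Quaternion
open Real

noncomputable def goldenα : ℝ := (1 + Real.sqrt 5) / 2

noncomputable def Efun (β₁ β₂ : ℝ) : ℝ :=
  (1 / 5) * (1 + β₁ + 2 * β₂ + 5 * β₁ * β₂ + goldenα * (β₁ + 3 * β₂ + 8 * β₁ * β₂))

/-- The `n`-th Fibonacci quaternion in `ℍ(β₁,β₂)`, realized as the quaternion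
algebra `ℍ[ℝ, -β₁, -β₂]` (so that `e₂² = -β₁`, `e₃² = -β₂`). -/
def FibQuat (β₁ β₂ : ℝ) (n : ℕ) : ℍ[ℝ, -β₁, -β₂] :=
  ⟨(Nat.fib n : ℝ), (Nat.fib (n + 1) : ℝ), (Nat.fib (n + 2) : ℝ), (Nat.fib (n + 3) : ℝ)⟩

/-- If `(x * star x).re ≠ 0` then `x` is a unit in a quaternion algebra over ℝ. -/
lemma isUnit_of_norm_ne_zero {c₁ c₂ : ℝ} (x : ℍ[ℝ, c₁, c₂])
    (h : (x * star x).re ≠ 0) : IsUnit x := by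
  set N : ℝ := (x * star x).re with hN
  have h1 : x * star x = (N : ℍ[ℝ, c₁, c₂]) := QuaternionAlgebra.mul_star_eq_coe x
  have hsym : (star x * x).re = N := by
    simp only [hN, QuaternionAlgebra.re_mul, QuaternionAlgebra.re_star,
      QuaternionAlgebra.imI_star, QuaternionAlgebra.imJ_star, QuaternionAlgebra.imK_star]
    ring
  have h2 : star x * x = (N : ℍ[ℝ, c₁, c₂]) := by
    rw [QuaternionAlgebra.star_mul_eq_coe x, hsym]
  refine ⟨⟨x, (N⁻¹ : ℝ) • star x, ?_, ?_⟩, rfl⟩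
  · rw [mul_smul_comm, h1]
    ext <;> simp [inv_mul_cancel₀ h]
  · rw [smul_mul_assoc, h2]
    ext <;> simp [inv_mul_cancel₀ h]

/-- The norm of the `n`-th Fibonacci quaternion. -/
noncomputable def fibNorm (β₁ β₂ : ℝ) (n : ℕ) : ℝ :=
  (Nat.fib n : ℝ) ^ 2 + β₁ * (Nat.fib (n + 1) : ℝ) ^ 2 + β₂ * (Nat.fib (n + 2) : ℝ) ^ 2
    + β₁ * β₂ * (Nat.fib (n + 3) : ℝ) ^ 2

lemma fibQuat_mul_star_re (β₁ β₂ : ℝ) (n : ℕ) :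
    (FibQuat β₁ β₂ n * star (FibQuat β₁ β₂ n)).re = fibNorm β₁ β₂ n := by
  simp [FibQuat, fibNorm, QuaternionAlgebra.re_mul]
  ring

/-- Auxiliary continuous function whose value at `(ψ/φ)^n` gives `fibNorm / φ^(2n)`. -/
noncomputable def hfun (β₁ β₂ : ℝ) (t : ℝ) : ℝ :=
  (1 / 5) * ((1 - t) ^ 2 + β₁ * (goldenRatio - goldenConj * t) ^ 2
    + β₂ * (goldenRatio ^ 2 - goldenConj ^ 2 * t) ^ 2
    + β₁ * β₂ * (goldenRatio ^ 3 - goldenConj ^ 3 * t) ^ 2)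

set_option maxHeartbeats 1600000 in
lemma hfun_zero (β₁ β₂ : ℝ) : hfun β₁ β₂ 0 = Efun β₁ β₂ := by
  have h2 : goldenRatio ^ 2 = goldenRatio + 1 := goldenRatio_sq
  simp only [hfun, Efun, goldenα, mul_zero, sub_zero]
  linear_combination ((1 / 5) * (β₁ + β₂ * (goldenRatio ^ 2 + goldenRatio + 2)
    + β₁ * β₂ * (goldenRatio ^ 4 + goldenRatio ^ 3 + 2 * goldenRatio ^ 2
      + 3 * goldenRatio + 5))) * h2

lemma fibNorm_eq (β₁ β₂ : ℝ) (n : ℕ) :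
    fibNorm β₁ β₂ n = goldenRatio ^ (2 * n) * hfun β₁ β₂ ((goldenConj / goldenRatio) ^ n) := by
  have hs : Real.sqrt 5 ^ 2 = 5 := Real.sq_sqrt (by norm_num)
  have hφn : goldenRatio ^ n ≠ 0 := pow_ne_zero _ goldenRatio_ne_zero
  have key : ∀ a b A B : ℝ, A ≠ 0 →
      ((A - B) / Real.sqrt 5) ^ 2 + β₁ * ((A * a - B * b) / Real.sqrt 5) ^ 2
        + β₂ * ((A * a ^ 2 - B * b ^ 2) / Real.sqrt 5) ^ 2
        + β₁ * β₂ * ((A * a ^ 3 - B * b ^ 3) / Real.sqrt 5) ^ 2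
      = A * A * ((1 / 5) * ((1 - B / A) ^ 2 + β₁ * (a - b * (B / A)) ^ 2
          + β₂ * (a ^ 2 - b ^ 2 * (B / A)) ^ 2 + β₁ * β₂ * (a ^ 3 - b ^ 3 * (B / A)) ^ 2)) := by
    intro a b A B hA
    simp only [div_pow, hs]
    field_simp
  have e : ∀ k : ℕ, (Nat.fib (n + k) : ℝ)
      = (goldenRatio ^ n * goldenRatio ^ k - goldenConj ^ n * goldenConj ^ k) / Real.sqrt 5 := by
    intro k
    rw [Real.coe_fib_eq, pow_add, pow_add]
  have e0 : (Nat.fib n : ℝ) = (goldenRatio ^ n - goldenConj ^ n) / Real.sqrt 5 :=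
    Real.coe_fib_eq n
  have harg : (goldenConj / goldenRatio) ^ n = goldenConj ^ n / goldenRatio ^ n :=
    div_pow _ _ _
  have h2n : goldenRatio ^ (2 * n) = goldenRatio ^ n * goldenRatio ^ n := by
    rw [two_mul, pow_add]
  simp only [fibNorm, hfun]
  rw [harg, h2n, e0, e 1, e 2, e 3, pow_one, pow_one]
  exact key goldenRatio goldenConj (goldenRatio ^ n) (goldenConj ^ n) hφn

theorem fib_quaternion_eventually_isUnit (β₁ β₂ : ℝ) (hE : Efun β₁ β₂ ≠ 0) :
    ∃ n₀ : ℕ, ∀ n ≥ n₀, IsUnit (FibQuat β₁ β₂ n) := by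
  have hr : |goldenConj / goldenRatio| < 1 := by
    rw [abs_div, abs_of_pos goldenRatio_pos, div_lt_one goldenRatio_pos]
    have h1 : |goldenConj| < 1 := abs_lt.mpr ⟨neg_one_lt_goldenConj, by linarith [goldenConj_neg]⟩
    linarith [one_lt_goldenRatio]
  have hcont : Continuous (hfun β₁ β₂) := by
    unfold hfun; continuity
  have htend : Filter.Tendsto (fun n : ℕ => hfun β₁ β₂ ((goldenConj / goldenRatio) ^ n))
      Filter.atTop (nhds (Efun β₁ β₂)) := by
    have := (hcont.tendsto 0).comp (tendsto_pow_atTop_nhds_zero_iff.mpr hr)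
    rwa [hfun_zero] at this
  have hev : ∀ᶠ n in Filter.atTop, hfun β₁ β₂ ((goldenConj / goldenRatio) ^ n) ≠ 0 :=
    htend.eventually_ne hE
  obtain ⟨n₀, hn₀⟩ := Filter.eventually_atTop.mp hev
  refine ⟨n₀, fun n hn => ?_⟩
  apply isUnit_of_norm_ne_zero
  rw [fibQuat_mul_star_re, fibNorm_eq]
  exact mul_ne_zero (pow_ne_zero _ goldenRatio_ne_zero) (hn₀ n hn)
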